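/- arXiv:1302.7074 — 3 statements merged into one kernel-verified Lean document; each statement's English description precedes it below -/
import Mathlib

section
/- Let D be a d×n complex matrix (a dictionary) and A an m×d complex matrix. Then A satisfies the D-null space property of order k if and only if the ℓ¹-synthesis method succeeds on all signals with k-sparse representations in D; that is, if and only if for every k-sparse vector z₀ ∈ ℂⁿ, every minimizer ẑ of ‖z‖₁ over the set {z ∈ ℂⁿ : ADz = ADz₀} satisfies Dẑ = Dz₀. -/
open Finset Matrix

/-- The ℓ¹ norm of a vector: the sum of the absolute values of its entries. -/
noncomputable def l1norm {n : Type*} [Fintype n] (v : n → ℂ) : ℝ :=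
  ∑ i, ‖v i‖

/-- The ℓ² (Euclidean) norm of a vector. -/
noncomputable def l2norm {n : Type*} [Fintype n] (v : n → ℂ) : ℝ :=
  Real.sqrt (∑ i, ‖v i‖ ^ 2)

/-- `restrict v T` agrees with `v` on the index set `T` and is zero elsewhere. -/
def restrict {n : Type*} [Fintype n] [DecidableEq n] (v : n → ℂ) (T : Finset n) : n → ℂ :=
  fun i => if i ∈ T then v i else 0

/-- A vector is `k`-sparse if it has at most `k` nonzero entries. -/
def KSparse {n : Type*} [Fintype n] [DecidableEq n] (k : ℕ) (z : n → ℂ) : Prop :=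
  ∃ T : Finset n, T.card ≤ k ∧ ∀ i ∉ T, z i = 0

/-- `A` satisfies the `D`-null space property of order `k` (`k`-`D`-NSP):
for every index set `T` with `|T| ≤ k` and every `v` with `Dv ∈ ker A` and `Dv ≠ 0`,
there exists `u ∈ ker D` such that `‖v_T + u‖₁ < ‖v_{T^c}‖₁`. -/
def DNSP {m d n : Type*} [Fintype m] [Fintype d] [Fintype n] [DecidableEq n]
    (A : Matrix m d ℂ) (D : Matrix d n ℂ) (k : ℕ) : Prop :=
  ∀ T : Finset n, T.card ≤ k → ∀ v : n → ℂ,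
    A.mulVec (D.mulVec v) = 0 → D.mulVec v ≠ 0 →
    ∃ u : n → ℂ, D.mulVec u = 0 ∧ l1norm (restrict v T + u) < l1norm (restrict v Tᶜ)

/-- `M` satisfies the null space property of order `k` (`k`-NSP):
for every nonzero `v ∈ ker M` and every index set `T` with `|T| ≤ k`,
`‖v_T‖₁ < ‖v_{T^c}‖₁`. -/
def NSP {m n : Type*} [Fintype m] [Fintype n] [DecidableEq n]
    (M : Matrix m n ℂ) (k : ℕ) : Prop :=
  ∀ v : n → ℂ, M.mulVec v = 0 → v ≠ 0 → ∀ T : Finset n, T.card ≤ k →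
    l1norm (restrict v T) < l1norm (restrict v Tᶜ)

/-- `A` satisfies the strong `D`-null space property of order `k` with constant `c`
(`k`-`D`-SNSP): for every index set `T` with `|T| ≤ k` and every `v ∈ ker (AD)`,
there exists `u ∈ ker D` such that `‖v_{T^c}‖₁ − ‖v_T + u‖₁ ≥ c‖Dv‖₂`. -/
def DSNSP {m d n : Type*} [Fintype m] [Fintype d] [Fintype n] [DecidableEq n]
    (A : Matrix m d ℂ) (D : Matrix d n ℂ) (k : ℕ) (c : ℝ) : Prop :=
  ∀ T : Finset n, T.card ≤ k → ∀ v : n → ℂ, (A * D).mulVec v = 0 →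
    ∃ u : n → ℂ, D.mulVec u = 0 ∧
      c * l2norm (D.mulVec v) ≤ l1norm (restrict v Tᶜ) - l1norm (restrict v T + u)

/-- A `d × n` matrix is full spark if every `d` of its columns are linearly independent. -/
def FullSpark {d n : ℕ} (D : Matrix (Fin d) (Fin n) ℂ) : Prop :=
  ∀ S : Finset (Fin n), S.card = d →
    LinearIndependent ℂ (fun j : S => Dᵀ (j : Fin n))

lemma l1norm_nonneg {n : Type*} [Fintype n] (v : n → ℂ) : 0 ≤ l1norm v :=
  Finset.sum_nonneg fun i _ => norm_nonneg _

lemma l1norm_neg {n : Type*} [Fintype n] (v : n → ℂ) : l1norm (-v) = l1norm v := by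
  simp [l1norm]

lemma l1norm_add_le {n : Type*} [Fintype n] (v w : n → ℂ) :
    l1norm (v + w) ≤ l1norm v + l1norm w := by
  rw [l1norm, l1norm, l1norm, ← Finset.sum_add_distrib]
  exact Finset.sum_le_sum fun i _ => norm_add_le _ _

lemma restrict_add_compl {n : Type*} [Fintype n] [DecidableEq n] (v : n → ℂ) (T : Finset n) :
    restrict v T + restrict v Tᶜ = v := by
  funext i
  by_cases h : i ∈ T <;> simp [_root_.restrict, h, Finset.mem_compl]

lemma l1norm_split {n : Type*} [Fintype n] [DecidableEq n] (v : n → ℂ) (T : Finset n) :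
    l1norm v = l1norm (restrict v T) + l1norm (restrict v Tᶜ) := by
  rw [l1norm, l1norm, l1norm, ← Finset.sum_add_distrib]
  refine Finset.sum_congr rfl fun i _ => ?_
  by_cases h : i ∈ T <;> simp [_root_.restrict, h, Finset.mem_compl]

lemma exists_l1_min {m n : ℕ} (M : Matrix (Fin m) (Fin n) ℂ) (z₀ : Fin n → ℂ) :
    ∃ zhat : Fin n → ℂ, M.mulVec zhat = M.mulVec z₀ ∧
      ∀ z : Fin n → ℂ, M.mulVec z = M.mulVec z₀ → l1norm zhat ≤ l1norm z := by
  have hcont : Continuous (l1norm : (Fin n → ℂ) → ℝ) :=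
    continuous_finset_sum _ fun i _ => continuous_norm.comp (continuous_apply i)
  have hMcont : Continuous (M.mulVec : (Fin n → ℂ) → Fin m → ℂ) := by
    have := LinearMap.continuous_of_finiteDimensional (M.mulVecLin)
    exact this
  set K : Set (Fin n → ℂ) :=
    {z | M.mulVec z = M.mulVec z₀ ∧ l1norm z ≤ l1norm z₀} with hK
  have hKclosed : IsClosed K :=
    (isClosed_eq hMcont continuous_const).inter (isClosed_le hcont continuous_const)
  have hKsub : K ⊆ Metric.closedBall 0 (l1norm z₀) := by
    intro z hz
    rw [Metric.mem_closedBall, dist_zero_right]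
    refine (pi_norm_le_iff_of_nonneg (l1norm_nonneg z₀)).2 fun i => ?_
    calc ‖z i‖ = ‖z i‖ := rfl
      _ ≤ l1norm z := by
          rw [l1norm]
          exact Finset.single_le_sum (f := fun j => ‖z j‖)
            (fun j _ => norm_nonneg _) (mem_univ i)
      _ ≤ l1norm z₀ := hz.2
  have hKcompact : IsCompact K :=
    (isCompact_closedBall (0 : Fin n → ℂ) _).of_isClosed_subset hKclosed hKsub
  have hKne : K.Nonempty := ⟨z₀, rfl, le_refl _⟩
  obtain ⟨zhat, hzhatK, hmin⟩ := hKcompact.exists_isMinOn hKne hcont.continuousOn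
  refine ⟨zhat, hzhatK.1, fun z hz => ?_⟩
  rcases le_or_gt (l1norm z) (l1norm z₀) with h | h
  · exact hmin ⟨hz, h⟩
  · exact le_trans (hmin (show z₀ ∈ K from ⟨rfl, le_refl _⟩)) h.le


/-- Theorem 1 (paper): `A` satisfies `k`-`D`-NSP iff the ℓ¹-synthesis method succeeds
on all signals with `k`-sparse representations in `D`: for every `k`-sparse `z₀`,
every minimizer `ẑ` of `‖z‖₁` over `{z : ADz = ADz₀}` satisfies `Dẑ = Dz₀`. -/
theorem stmt_0 {m d n : ℕ} (A : Matrix (Fin m) (Fin d) ℂ) (D : Matrix (Fin d) (Fin n) ℂ)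
    (k : ℕ) :
    DNSP A D k ↔
      ∀ z₀ : Fin n → ℂ, KSparse k z₀ →
        ∀ zhat : Fin n → ℂ,
          (A * D).mulVec zhat = (A * D).mulVec z₀ →
          (∀ z : Fin n → ℂ, (A * D).mulVec z = (A * D).mulVec z₀ → l1norm zhat ≤ l1norm z) →
          D.mulVec zhat = D.mulVec z₀ := by
  unfold DNSP KSparse
  constructor
  · rintro hNSP z₀ ⟨T, hT, hz₀⟩ zhat hfeas hmin
    by_contra hne
    set v := zhat - z₀ with hv
    have hADv : A.mulVec (D.mulVec v) = 0 := by
      rw [Matrix.mulVec_mulVec, hv, Matrix.mulVec_sub, hfeas, sub_self]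
    have hDv : D.mulVec v ≠ 0 := by
      intro h
      apply hne
      have := congrArg (fun w => w + D.mulVec z₀) h
      simpa [hv, Matrix.mulVec_sub, sub_add_cancel] using this
    obtain ⟨u, hDu, hlt⟩ := hNSP T hT v hADv hDv
    have hzhat : zhat = z₀ + v := by rw [hv]; ring
    have hrT : _root_.restrict zhat T = z₀ + _root_.restrict v T := by
      funext i
      by_cases h : i ∈ T
      · simp [_root_.restrict, h, hzhat]
      · simp [_root_.restrict, h, hzhat, hz₀ i h]
    have hrTc : _root_.restrict zhat Tᶜ = _root_.restrict v Tᶜ := by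
      funext i
      by_cases h : i ∈ T
      · simp [_root_.restrict, h, hzhat, Finset.mem_compl]
      · simp [_root_.restrict, h, hzhat, hz₀ i h, Finset.mem_compl]
    have hsplit : l1norm zhat = l1norm (z₀ + _root_.restrict v T) + l1norm (_root_.restrict v Tᶜ) := by
      rw [l1norm_split zhat T, hrT, hrTc]
    have hfeas' : (A * D).mulVec (z₀ - u) = (A * D).mulVec z₀ := by
      simp [Matrix.mulVec_sub, ← Matrix.mulVec_mulVec, hDu]
    have htri : l1norm (z₀ - u) ≤ l1norm (z₀ + _root_.restrict v T) + l1norm (_root_.restrict v T + u) := by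
      have : z₀ - u = (z₀ + _root_.restrict v T) + (-(_root_.restrict v T + u)) := by ring
      rw [this]
      calc l1norm _ ≤ l1norm (z₀ + _root_.restrict v T) + l1norm (-(_root_.restrict v T + u)) :=
            l1norm_add_le _ _
        _ = _ := by rw [l1norm_neg]
    have := hmin (z₀ - u) hfeas'
    linarith
  · intro hsucc T hT v hADv hDv
    set z₀ := _root_.restrict v T with hz₀
    have hks : ∃ T' : Finset (Fin n), T'.card ≤ k ∧ ∀ i ∉ T', z₀ i = 0 :=
      ⟨T, hT, fun i hi => if_neg hi⟩
    obtain ⟨zhat, hfeas, hmin⟩ := exists_l1_min (A * D) z₀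
    have hDz : D.mulVec zhat = D.mulVec z₀ := hsucc z₀ hks zhat hfeas hmin
    refine ⟨zhat - z₀, by rw [Matrix.mulVec_sub, hDz, sub_self], ?_⟩
    have hzw : z₀ + (zhat - z₀) = zhat := by ring
    rw [hzw]
    -- w := -restrict v Tᶜ is feasible
    have hADv' : (A * D).mulVec v = 0 := by rw [← Matrix.mulVec_mulVec]; exact hADv
    have hw : -(_root_.restrict v Tᶜ) = z₀ - v := by
      rw [hz₀, eq_sub_iff_add_eq, neg_add_eq_sub, sub_eq_iff_eq_add']
      rw [add_comm]; exact (restrict_add_compl v T).symm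
    have hfeasw : (A * D).mulVec (-(_root_.restrict v Tᶜ)) = (A * D).mulVec z₀ := by
      rw [hw, Matrix.mulVec_sub, hADv', sub_zero]
    have hle : l1norm zhat ≤ l1norm (_root_.restrict v Tᶜ) := by
      have := hmin _ hfeasw
      rwa [l1norm_neg] at this
    refine lt_of_le_of_ne hle fun heq => ?_
    have hminw : ∀ z : Fin n → ℂ, (A * D).mulVec z = (A * D).mulVec z₀ →
        l1norm (-(_root_.restrict v Tᶜ)) ≤ l1norm z := by
      intro z hz
      rw [l1norm_neg, ← heq]
      exact hmin z hz
    have := hsucc z₀ hks _ hfeasw hminw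
    rw [hw, Matrix.mulVec_sub, sub_eq_self] at this
    exact hDv this
end

section
/- Let B ∈ ℂ^{d×(n−1)} be a matrix of rank d, let α ∈ ℂ^{n−1} satisfy ‖α‖₁ ≤ 1, let v = Bα, and let D = [B, v] ∈ ℂ^{d×n}. If a matrix A ∈ ℂ^{m×d} satisfies the D-null space property of order k, then A satisfies the B-null space property of the same order k. -/
open Finset Matrix

/-- Proposition 2 (paper): let `B` be a full rank `d × n` matrix, `‖α‖₁ ≤ 1`, `v = Bα`,
and `D = [B, v]`. If `A` satisfies the `D`-null space property of order `k`, then `A`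
satisfies the `B`-null space property of order `k`. -/
theorem stmt_5 {m d n k : ℕ} (B : Matrix (Fin d) (Fin n) ℂ) (hB : B.rank = d)
    (α : Fin n → ℂ) (hα : l1norm α ≤ 1)
    (D : Matrix (Fin d) (Fin (n + 1)) ℂ)
    (hD : D = Matrix.of fun x => Fin.snoc (B x) (B.mulVec α x))
    (A : Matrix (Fin m) (Fin d) ℂ) (hA : DNSP A D k) :
    DNSP A B k := by
  intro T hT v hAv hv
  have hDsnoc : ∀ (w : Fin n → ℂ) (t : ℂ),
      D.mulVec (Fin.snoc w t) = B.mulVec w + t • B.mulVec α := by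
    intro w t
    funext x
    simp only [Matrix.mulVec, dotProduct, hD, Matrix.of_apply, Fin.sum_univ_castSucc,
      Fin.snoc_castSucc, Fin.snoc_last, Pi.add_apply, Pi.smul_apply, smul_eq_mul]
    ring
  set emb : Fin n ↪ Fin (n + 1) := ⟨Fin.castSucc, Fin.castSucc_injective n⟩ with hemb
  set T' : Finset (Fin (n + 1)) := T.map emb with hT'def
  set v' : Fin (n + 1) → ℂ := Fin.snoc v 0 with hv'def
  have hDv' : D.mulVec v' = B.mulVec v := by
    rw [hv'def, hDsnoc, zero_smul, add_zero]
  obtain ⟨u', hu'0, hu'lt⟩ := hA T' (by rw [hT'def, Finset.card_map]; exact hT) v'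
    (by rw [hDv']; exact hAv) (by rw [hDv']; exact hv)
  set t : ℂ := u' (Fin.last n) with htdef
  have hu'eq : u' = Fin.snoc (Fin.init u') t := (Fin.snoc_init_self u').symm
  have hDu' : D.mulVec u' = B.mulVec (Fin.init u') + t • B.mulVec α := by
    conv_lhs => rw [hu'eq]
    exact hDsnoc _ _
  refine ⟨Fin.init u' + t • α, ?_, ?_⟩
  · rw [Matrix.mulVec_add, Matrix.mulVec_smul, ← hDu', hu'0]
  · have hmemT' : ∀ i : Fin n, i.castSucc ∈ T' ↔ i ∈ T := by
      intro i; simp [hT'def, hemb]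
    have hlast : Fin.last n ∉ T' := by
      simp only [hT'def, Finset.mem_map, hemb]
      rintro ⟨a, -, ha⟩
      exact (Fin.castSucc_lt_last a).ne (by simpa using ha)
    have hrc : l1norm (restrict v' T'ᶜ) = l1norm (restrict v Tᶜ) := by
      unfold l1norm _root_.restrict
      rw [Fin.sum_univ_castSucc]
      simp only [Finset.mem_compl, hmemT', hlast, not_false_iff, if_true,
        hv'def, Fin.snoc_castSucc, Fin.snoc_last]
      simp
    have hr1 : l1norm (restrict v' T' + u')
        = (∑ i, ‖_root_.restrict v T i + u' i.castSucc‖) + ‖t‖ := by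
      unfold l1norm _root_.restrict
      rw [Fin.sum_univ_castSucc]
      simp only [Pi.add_apply, hmemT', hlast, if_false,
        hv'def, Fin.snoc_castSucc, Fin.snoc_last, zero_add, htdef]
    have hle : l1norm (_root_.restrict v T + (Fin.init u' + t • α))
        ≤ (∑ i, ‖_root_.restrict v T i + u' i.castSucc‖) + ‖t‖ := by
      unfold l1norm
      have h1 : ∀ i, ‖(_root_.restrict v T + (Fin.init u' + t • α)) i‖
          ≤ ‖_root_.restrict v T i + u' i.castSucc‖ + ‖t‖ * ‖α i‖ := by
        intro i
        have : (_root_.restrict v T + (Fin.init u' + t • α)) i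
            = (_root_.restrict v T i + u' i.castSucc) + t * α i := by
          simp [Fin.init]; ring
        rw [this]
        calc ‖(_root_.restrict v T i + u' i.castSucc) + t * α i‖
            ≤ ‖_root_.restrict v T i + u' i.castSucc‖ + ‖t * α i‖ :=
              norm_add_le _ _
          _ = ‖_root_.restrict v T i + u' i.castSucc‖
              + ‖t‖ * ‖α i‖ := by rw [norm_mul]
      calc ∑ i, ‖(_root_.restrict v T + (Fin.init u' + t • α)) i‖
          ≤ ∑ i, (‖_root_.restrict v T i + u' i.castSucc‖
              + ‖t‖ * ‖α i‖) := Finset.sum_le_sum fun i _ => h1 i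
        _ = (∑ i, ‖_root_.restrict v T i + u' i.castSucc‖)
              + ‖t‖ * l1norm α := by
            rw [Finset.sum_add_distrib, ← Finset.mul_sum]; rfl
        _ ≤ (∑ i, ‖_root_.restrict v T i + u' i.castSucc‖) + ‖t‖ := by
            have := mul_le_of_le_one_right (norm_nonneg t) hα
            linarith
    calc l1norm (_root_.restrict v T + (Fin.init u' + t • α))
        ≤ _ := hle
      _ = l1norm (restrict v' T' + u') := hr1.symm
      _ < l1norm (restrict v' T'ᶜ) := hu'lt
      _ = l1norm (restrict v Tᶜ) := hrc
end

section
/- Let D ∈ ℂ^{d×n} (n ≥ d) be a full spark dictionary, i.e., every d columns of D are linearly independent, and let A ∈ ℂ^{m×d}. If the composite matrix AD ∈ ℂ^{m×n} satisfies the null space property of order k, then there exists a constant c > 0 such that A satisfies the strong D-null space property of order k with constant c. -/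
open Finset Matrix

section Aux

variable {N : Type*} [Fintype N] [DecidableEq N]

lemma l1norm_smul_real (t : ℝ) (ht : 0 ≤ t) (v : N → ℂ) :
    l1norm ((t : ℂ) • v) = t * l1norm v := by
  simp only [l1norm, Pi.smul_apply, smul_eq_mul, norm_mul,
    Complex.norm_real, Real.norm_eq_abs, abs_of_nonneg ht, Finset.mul_sum]

lemma l2norm_smul_real (t : ℝ) (ht : 0 ≤ t) (v : N → ℂ) :
    l2norm ((t : ℂ) • v) = t * l2norm v := by
  simp only [l2norm, Pi.smul_apply, smul_eq_mul, norm_mul,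
    Complex.norm_real, Real.norm_eq_abs, abs_of_nonneg ht, mul_pow]
  rw [← Finset.mul_sum, Real.sqrt_mul (sq_nonneg t), Real.sqrt_sq ht]

lemma l2norm_nonneg (v : N → ℂ) : 0 ≤ l2norm v := Real.sqrt_nonneg _

lemma restrict_smul (t : ℂ) (v : N → ℂ) (T : Finset N) :
    _root_.restrict (t • v) T = t • _root_.restrict v T := by
  funext i
  simp only [_root_.restrict, Pi.smul_apply, smul_eq_mul, mul_ite, mul_zero]

lemma continuous_l1norm_restrict (T : Finset N) :
    Continuous fun v : N → ℂ => l1norm (restrict v T) := by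
  unfold l1norm _root_.restrict
  apply continuous_finset_sum
  intro i _
  by_cases h : i ∈ T <;> simp only [h, if_true, if_false]
  · exact continuous_norm.comp (continuous_apply i)
  · simpa using continuous_const (y := ‖(0:ℂ)‖)

lemma continuous_mulVec' {M N : Type*} [Fintype M] [Fintype N]
    (B : Matrix M N ℂ) : Continuous fun v : N → ℂ => B.mulVec v := by
  apply continuous_pi
  intro i
  simp only [Matrix.mulVec, dotProduct]
  exact continuous_finset_sum _ fun j _ => continuous_const.mul (continuous_apply j)

lemma continuous_l2norm_mulVec {M : Type*} [Fintype M] (B : Matrix M N ℂ) :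
    Continuous fun v : N → ℂ => l2norm (B.mulVec v) := by
  unfold l2norm
  apply Real.continuous_sqrt.comp
  apply continuous_finset_sum
  intro i _
  exact ((continuous_norm.comp ((continuous_apply i).comp
    (continuous_mulVec' B))).pow 2)

end Aux

lemma key_lemma {m d n : ℕ} (D : Matrix (Fin d) (Fin n) ℂ)
    (A : Matrix (Fin m) (Fin d) ℂ) (k : ℕ) (hAD : NSP (A * D) k)
    (T : Finset (Fin n)) (hT : T.card ≤ k) :
    ∃ c : ℝ, 0 < c ∧ ∀ v : Fin n → ℂ, (A * D).mulVec v = 0 →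
      c * l2norm (D.mulVec v) ≤ l1norm (restrict v Tᶜ) - l1norm (restrict v T) := by
  set g : (Fin n → ℂ) → ℝ := fun v => l1norm (restrict v Tᶜ) - l1norm (restrict v T)
    with hg
  set χ : (Fin n → ℂ) → ℝ := fun v => l2norm (D.mulVec v) with hχ
  have hgcont : Continuous g :=
    (continuous_l1norm_restrict Tᶜ).sub (continuous_l1norm_restrict T)
  have hχcont : Continuous χ := continuous_l2norm_mulVec D
  have hχnonneg : ∀ v, 0 ≤ χ v := fun v => Real.sqrt_nonneg _
  set S : Set (Fin n → ℂ) := {v | (A * D).mulVec v = 0} ∩ Metric.sphere 0 1 with hSdef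
  have hSclosed : IsClosed {v : Fin n → ℂ | (A * D).mulVec v = 0} :=
    isClosed_eq (continuous_mulVec' _) continuous_const
  have hScompact : IsCompact S := (isCompact_sphere 0 1).inter_left hSclosed
  -- zero vector case
  have hzero : ∀ c : ℝ, c * χ 0 ≤ g 0 := by
    intro c
    simp [hχ, hg, l1norm, l2norm, _root_.restrict, Matrix.mulVec_zero]
  -- scaling
  have hscaleg : ∀ (t : ℝ), 0 ≤ t → ∀ w, g ((t : ℂ) • w) = t * g w := by
    intro t ht w
    simp only [hg, restrict_smul, l1norm_smul_real t ht]
    ring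
  have hscaleχ : ∀ (t : ℝ), 0 ≤ t → ∀ w, χ ((t : ℂ) • w) = t * χ w := by
    intro t ht w
    simp only [hχ, Matrix.mulVec_smul, l2norm_smul_real t ht]
  -- normalization
  have hnorm : ∀ v : Fin n → ℂ, (A * D).mulVec v = 0 → v ≠ 0 →
      ((‖v‖ : ℂ)⁻¹ • v) ∈ S ∧ v = (‖v‖ : ℂ) • ((‖v‖ : ℂ)⁻¹ • v) := by
    intro v hker hv
    have hvpos : 0 < ‖v‖ := norm_pos_iff.mpr hv
    have hne : (‖v‖ : ℂ) ≠ 0 := by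
      simpa using hvpos.ne'
    refine ⟨⟨?_, ?_⟩, ?_⟩
    · show (A * D).mulVec ((‖v‖ : ℂ)⁻¹ • v) = 0
      rw [Matrix.mulVec_smul, hker, smul_zero]
    · show ((‖v‖ : ℂ)⁻¹ • v) ∈ Metric.sphere (0 : Fin n → ℂ) 1
      simp only [mem_sphere_iff_norm, sub_zero, norm_smul, norm_inv,
        Complex.norm_real, Real.norm_eq_abs, abs_of_pos hvpos]
      exact inv_mul_cancel₀ hvpos.ne'
    · rw [smul_inv_smul₀ hne]
  by_cases hS : S.Nonempty
  · obtain ⟨v0, hv0, hmin⟩ := hScompact.exists_isMinOn hS hgcont.continuousOn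
    obtain ⟨w0, hw0, hmax⟩ := hScompact.exists_isMaxOn hS hχcont.continuousOn
    have hv0ne : v0 ≠ 0 := by
      intro h
      have := hv0.2
      rw [h] at this
      simp at this
    have hε : 0 < g v0 := by
      have := hAD v0 hv0.1 hv0ne T hT
      simp only [hg]
      linarith
    have hC0 : 0 ≤ χ w0 := hχnonneg w0
    refine ⟨g v0 / (χ w0 + 1), by positivity, ?_⟩
    have hcball : ∀ v ∈ S, g v0 / (χ w0 + 1) * χ v ≤ g v := by
      intro v hv
      have h1 : χ v ≤ χ w0 := hmax hv
      have h2 : g v0 ≤ g v := hmin hv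
      have h3 : g v0 / (χ w0 + 1) * (χ w0 + 1) = g v0 := by
        field_simp
      have h4 : 0 < g v0 / (χ w0 + 1) := by positivity
      have h5 : g v0 / (χ w0 + 1) * χ v ≤ g v0 / (χ w0 + 1) * (χ w0 + 1) :=
        mul_le_mul_of_nonneg_left (by linarith) h4.le
      rw [h3] at h5
      exact h5.trans h2
    intro v hker
    by_cases hv : v = 0
    · rw [hv]; exact hzero _
    · obtain ⟨hmem, hveq⟩ := hnorm v hker hv
      have hvpos : (0:ℝ) ≤ ‖v‖ := norm_nonneg v
      calc g v0 / (χ w0 + 1) * χ v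
          = g v0 / (χ w0 + 1) * (‖v‖ * χ ((‖v‖ : ℂ)⁻¹ • v)) := by
            rw [← hscaleχ ‖v‖ hvpos, ← hveq]
        _ = ‖v‖ * (g v0 / (χ w0 + 1) * χ ((‖v‖ : ℂ)⁻¹ • v)) := by ring
        _ ≤ ‖v‖ * g ((‖v‖ : ℂ)⁻¹ • v) := by
            apply mul_le_mul_of_nonneg_left (hcball _ hmem) hvpos
        _ = g v := by rw [← hscaleg ‖v‖ hvpos, ← hveq]
  · refine ⟨1, one_pos, ?_⟩
    intro v hker
    by_cases hv : v = 0
    · rw [hv]; exact hzero _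
    · exact absurd ⟨_, (hnorm v hker hv).1⟩ hS

/-- If `D` is a full spark dictionary and `AD` satisfies the null space property of order
`k`, then there exists a constant `c > 0` such that `A` satisfies the strong `D`-null
space property of order `k` with constant `c`. -/
theorem stmt_7 {m d n : ℕ} (hn : d ≤ n) (D : Matrix (Fin d) (Fin n) ℂ) (hD : FullSpark D)
    (A : Matrix (Fin m) (Fin d) ℂ) (k : ℕ) (hAD : NSP (A * D) k) :
    ∃ c : ℝ, 0 < c ∧ DSNSP A D k c := by
  classical
  set P : Finset (Finset (Fin n)) :=
    Finset.univ.filter (fun T => T.card ≤ k) with hP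
  have hPne : P.Nonempty := ⟨∅, by simp [hP]⟩
  set f : Finset (Fin n) → ℝ := fun T =>
    if h : T.card ≤ k then (key_lemma D A k hAD T h).choose else 1 with hf
  have hfpos : ∀ T, 0 < f T := by
    intro T
    by_cases h : T.card ≤ k
    · simp only [hf, dif_pos h]
      exact (key_lemma D A k hAD T h).choose_spec.1
    · simp [hf, dif_neg h]
  refine ⟨P.inf' hPne f, ?_, ?_⟩
  · rw [Finset.lt_inf'_iff]
    exact fun T _ => hfpos T
  · intro T hT v hv
    refine ⟨0, Matrix.mulVec_zero D, ?_⟩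
    rw [add_zero]
    have hTP : T ∈ P := by simp [hP, hT]
    have h1 : P.inf' hPne f ≤ f T := Finset.inf'_le f hTP
    have h2 := (key_lemma D A k hAD T hT).choose_spec.2 v hv
    have h3 : f T = (key_lemma D A k hAD T hT).choose := by simp [hf, dif_pos hT]
    have h4 : 0 ≤ l2norm (D.mulVec v) := Real.sqrt_nonneg _
    calc P.inf' hPne f * l2norm (D.mulVec v)
        ≤ f T * l2norm (D.mulVec v) := mul_le_mul_of_nonneg_right h1 h4
      _ ≤ _ := by rw [h3]; exact h2
end
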